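/- arXiv:2301.02833 — 2 statements merged into one kernel-verified Lean document; each statement's English description precedes it below -/
import Mathlib

section
/- Let S be a finite semigroup and x, y ∈ S. If x ≤_R y and x is J-equivalent to y, then x is R-equivalent to y. -/
/-- Green's R-preorder. -/
def leR {S : Type*} [Semigroup S] (s t : S) : Prop := s = t ∨ ∃ a, s = t * a
/-- Green's L-preorder. -/
def leL {S : Type*} [Semigroup S] (s t : S) : Prop := s = t ∨ ∃ a, s = a * t
/-- Green's J-preorder. -/
def leJ {S : Type*} [Semigroup S] (s t : S) : Prop :=
  leR s t ∨ leL s t ∨ ∃ a b, s = a * t * b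

/-- In a finite monoid, some positive power of any element is idempotent. -/
lemma exists_idem_pow {M : Type*} [Monoid M] [Finite M] (u : M) :
    ∃ n > 0, u ^ n * u ^ n = u ^ n := by
  obtain ⟨m, n, hmn, h⟩ := Finite.exists_ne_map_eq_of_infinite (fun k : ℕ => u ^ k)
  wlog hlt : m < n generalizing m n
  · exact this n m hmn.symm h.symm (by omega)
  set d := n - m with hd
  have hdpos : 0 < d := by omega
  have hper : ∀ s, m ≤ s → u ^ (s + d) = u ^ s := by
    intro s hs
    have : u ^ (s + d) = u ^ (s - m) * u ^ (m + d) := by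
      rw [← pow_add]; congr 1; omega
    rw [this]
    have : m + d = n := by omega
    rw [this, ← h, ← pow_add]
    congr 1; omega
  have hper' : ∀ s k, m ≤ s → u ^ (s + k * d) = u ^ s := by
    intro s k hs
    induction k with
    | zero => simp
    | succ k ih =>
      have : s + (k + 1) * d = (s + k * d) + d := by ring
      rw [this, hper _ (by omega), ih]
  refine ⟨d * (m + 1), by positivity, ?_⟩
  rw [← pow_add]
  have : d * (m + 1) + d * (m + 1) = d * (m + 1) + (m + 1) * d := by ring
  rw [this, hper' _ _ (by nlinarith)]

/-- Semigroup iterated product: spow u n = u^(n+1). -/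
def spow {S : Type*} [Semigroup S] (u : S) : ℕ → S
  | 0 => u
  | n + 1 => u * spow u n

lemma coe_spow {S : Type*} [Semigroup S] (u : S) (n : ℕ) :
    ((spow u n : S) : WithOne S) = (u : WithOne S) ^ (n + 1) := by
  induction n with
  | zero => simp [spow]
  | succ n ih =>
    rw [spow, WithOne.coe_mul, ih]
    exact (pow_succ' _ _).symm

/-- Key stability lemma: if y = b * y * u in a finite semigroup, then y ≤_R y * u. -/
lemma stab {S : Type*} [Semigroup S] [Fintype S] {y b u : S} (h : y = b * y * u) :
    leR y (y * u) := by
  have key : ∀ n : ℕ, (y : WithOne S) = (b : WithOne S) ^ (n + 1) * y * (u : WithOne S) ^ (n + 1) := by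
    intro n
    induction n with
    | zero => simpa using congrArg (fun z : S => (z : WithOne S)) h
    | succ n ih =>
      calc (y : WithOne S) = (b : WithOne S) ^ (n + 1) * y * (u : WithOne S) ^ (n + 1) := ih
        _ = (b : WithOne S) ^ (n + 1) * (b * y * u) * (u : WithOne S) ^ (n + 1) := by
            rw [← WithOne.coe_mul, ← WithOne.coe_mul, ← h]
        _ = (b : WithOne S) ^ (n + 2) * y * (u : WithOne S) ^ (n + 2) := by
            rw [show n + 2 = (n + 1) + 1 from rfl, pow_succ (b : WithOne S) (n + 1),
              pow_succ' (u : WithOne S) (n + 1)]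
            simp only [mul_assoc]
  haveI : Finite (WithOne S) := inferInstanceAs (Finite (Option S))
  obtain ⟨n, hn, hidem⟩ := exists_idem_pow (u : WithOne S)
  have hy : (y : WithOne S) * (u : WithOne S) ^ n = y := by
    obtain ⟨m, rfl⟩ : ∃ m, n = m + 1 := ⟨n - 1, by omega⟩
    calc (y : WithOne S) * (u : WithOne S) ^ (m + 1)
        = (b : WithOne S) ^ (m + 1) * y * ((u : WithOne S) ^ (m + 1) * (u : WithOne S) ^ (m + 1)) := by
          conv_lhs => rw [key m]
          rw [mul_assoc]
      _ = (b : WithOne S) ^ (m + 1) * y * (u : WithOne S) ^ (m + 1) := by rw [hidem]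
      _ = y := (key m).symm
  rcases Nat.lt_or_ge n 2 with h2 | h2
  · -- n = 1 : y * u = y
    interval_cases n
    left
    refine WithOne.coe_inj.mp ?_
    push_cast
    simpa using hy.symm
  · right
    refine ⟨spow u (n - 2), ?_⟩
    apply WithOne.coe_inj.mp
    push_cast
    rw [coe_spow, mul_assoc, ← pow_succ']
    have : n - 2 + 1 + 1 = n := by omega
    rw [this, hy]

/-- in a finite semigroup, x ≤_R y together with x J y implies x R y. -/
theorem leR_J_imp_R (S : Type*) [Semigroup S] [Fintype S] (x y : S)
    (hR : leR x y) (hJ : leJ x y ∧ leJ y x) :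
    leR x y ∧ leR y x := by
  refine ⟨hR, ?_⟩
  rcases hR with rfl | ⟨a, rfl⟩
  · exact Or.inl rfl
  rcases hJ.2 with hyx | hyx | ⟨b, c, hyx⟩
  · exact hyx
  · rcases hyx with hyx | ⟨b, hyx⟩
    · exact Or.inl hyx
    · -- y = b * (y * a) = b * y * a
      exact stab (u := a) (b := b) (by rw [mul_assoc]; exact hyx)
  · -- y = b * (y * a) * c = (b * y) * (a * c)... y = b*y*(a*c)
    have h' : y = b * y * (a * c) := by
      simp only [mul_assoc] at hyx ⊢; exact hyx
    have := stab (u := a * c) (b := b) h'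
    rcases this with h | ⟨d, h⟩
    · right
      refine ⟨c, ?_⟩
      simp only [mul_assoc] at h ⊢; exact h
    · right
      refine ⟨c * d, ?_⟩
      simp only [mul_assoc] at h ⊢; exact h
end

section
/- Let c : {(x,y) ∈ ℚ × ℚ | x < y} → S be additive for a finite semigroup S, fix u < v, and define γ : (u,v) → S × S by γ(z) = (c(u,z), c(z,v)). Suppose all values of c on pairs from (u,v) ∪ {u,v} lie in one J-class. If w < z both lie in (u,v) and γ(w) = γ(z) = (l, r), then c(w,z) is R-equivalent to r and L-equivalent to l; hence all colours occurring on any γ-monochromatic set are H-equivalent to one another. -/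
/-- Green's R-equivalence. -/
def eqR {S : Type*} [Semigroup S] (s t : S) : Prop := leR s t ∧ leR t s
/-- Green's L-equivalence. -/
def eqL {S : Type*} [Semigroup S] (s t : S) : Prop := leL s t ∧ leL t s
/-- Green's J-equivalence. -/
def eqJ {S : Type*} [Semigroup S] (s t : S) : Prop := leJ s t ∧ leJ t s
/-- Green's H-equivalence. -/
def eqH {S : Type*} [Semigroup S] (s t : S) : Prop := eqR s t ∧ eqL s t

section Aux

variable {M : Type*} [Monoid M]

/-- In a finite monoid, some positive power satisfies `c ^ n = c ^ (2 * n)`. -/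
lemma aux_exists_pow_eq_sq [Finite M] (cc : M) : ∃ n, 0 < n ∧ cc ^ n = cc ^ (2 * n) := by
  obtain ⟨i, j, hij, hpow⟩ := Finite.exists_ne_map_eq_of_infinite (fun n : ℕ => cc ^ n)
  wlog h : i < j generalizing i j
  · exact this j i hij.symm hpow.symm (by omega)
  set m := j - i with hm
  have hm0 : 0 < m := by omega
  have hstep : ∀ k, cc ^ (i + k) = cc ^ (i + m + k) := by
    intro k
    have : cc ^ i * cc ^ k = cc ^ j * cc ^ k := by rw [hpow]
    rw [← pow_add, ← pow_add] at this
    have hj : i + m = j := by omega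
    rw [hj]; exact this
  have hiter : ∀ t k, cc ^ (i + k) = cc ^ (i + t * m + k) := by
    intro t
    induction t with
    | zero => simp
    | succ t ih =>
      intro k
      have h1 := ih (m + k)
      have h2 := hstep k
      calc cc ^ (i + k) = cc ^ (i + m + k) := h2
        _ = cc ^ (i + (m + k)) := by ring_nf
        _ = cc ^ (i + t * m + (m + k)) := h1
        _ = cc ^ (i + (t + 1) * m + k) := by ring_nf
  have hni : i ≤ (i + 1) * m := by
    calc i ≤ (i + 1) * 1 := by omega
      _ ≤ (i + 1) * m := Nat.mul_le_mul_left _ hm0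
  obtain ⟨N, hN1, hN2⟩ : ∃ N, i ≤ N ∧ N = (i + 1) * m :=
    ⟨(i + 1) * m, hni, rfl⟩
  refine ⟨N, by rw [hN2]; exact Nat.mul_pos (by omega) hm0, ?_⟩
  have key := hiter (i + 1) (N - i)
  rw [← hN2] at key
  have e1 : i + (N - i) = N := by omega
  have e2 : i + N + (N - i) = 2 * N := by omega
  rw [e1, e2] at key
  exact key

/-- Stability (R-side), in a finite monoid: if `s = t * a` and `t = p * s * q`
then `t = s * b` for some `b`. -/
lemma aux_stab [Finite M] {s t : M} (h1 : ∃ a, s = t * a) (h2 : ∃ p q, t = p * s * q) :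
    ∃ b, t = s * b := by
  obtain ⟨a, ha⟩ := h1
  obtain ⟨p, q, hpq⟩ := h2
  have key : t = p * t * (a * q) := by
    calc t = p * s * q := hpq
      _ = p * (t * a) * q := by rw [ha]
      _ = p * t * (a * q) := by simp [mul_assoc]
  have hiter : ∀ n, t = p ^ n * t * (a * q) ^ n := by
    intro n
    induction n with
    | zero => simp
    | succ n ih =>
      calc t = p * t * (a * q) := key
        _ = p * (p ^ n * t * (a * q) ^ n) * (a * q) := by rw [← ih]
        _ = (p * p ^ n) * t * ((a * q) ^ n * (a * q)) := by simp [mul_assoc]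
        _ = p ^ (n+1) * t * (a * q) ^ (n+1) := by rw [← pow_succ', ← pow_succ]
  obtain ⟨n, hn0, hn⟩ := aux_exists_pow_eq_sq (a * q)
  have habs : t * (a * q) ^ n = t := by
    have h := hiter n
    calc t * (a * q) ^ n = (p ^ n * t * (a * q) ^ n) * (a * q) ^ n := by rw [← h]
      _ = p ^ n * t * ((a * q) ^ n * (a * q) ^ n) := by simp [mul_assoc]
      _ = p ^ n * t * (a * q) ^ (2 * n) := by rw [← pow_add, ← two_mul]
      _ = p ^ n * t * (a * q) ^ n := by rw [← hn]
      _ = t := h.symm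
  obtain ⟨n', rfl⟩ : ∃ n', n = n' + 1 := ⟨n - 1, by omega⟩
  refine ⟨q * (a * q) ^ n', ?_⟩
  calc t = t * (a * q) ^ (n' + 1) := habs.symm
    _ = t * (a * q) * (a * q) ^ n' := by rw [pow_succ']; simp [mul_assoc]
    _ = (t * a) * (q * (a * q) ^ n') := by simp [mul_assoc]
    _ = s * (q * (a * q) ^ n') := by rw [← ha]

/-- Stability (L-side). -/
lemma aux_stab_L [Finite M] {s t : M} (h1 : ∃ a, s = a * t) (h2 : ∃ p q, t = p * s * q) :
    ∃ b, t = b * s := by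
  obtain ⟨a, ha⟩ := h1
  obtain ⟨p, q, hpq⟩ := h2
  have key : t = (p * a) * t * q := by
    calc t = p * s * q := hpq
      _ = p * (a * t) * q := by rw [ha]
      _ = (p * a) * t * q := by simp [mul_assoc]
  have hiter : ∀ n, t = (p * a) ^ n * t * q ^ n := by
    intro n
    induction n with
    | zero => simp
    | succ n ih =>
      calc t = (p * a) * t * q := key
        _ = (p * a) * ((p * a) ^ n * t * q ^ n) * q := by rw [← ih]
        _ = ((p * a) * (p * a) ^ n) * t * (q ^ n * q) := by simp [mul_assoc]
        _ = (p * a) ^ (n+1) * t * q ^ (n+1) := by rw [← pow_succ', ← pow_succ]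
  obtain ⟨n, hn0, hn⟩ := aux_exists_pow_eq_sq (p * a)
  have habs : (p * a) ^ n * t = t := by
    have h := hiter n
    calc (p * a) ^ n * t = (p * a) ^ n * ((p * a) ^ n * t * q ^ n) := by rw [← h]
      _ = ((p * a) ^ n * (p * a) ^ n) * t * q ^ n := by simp [mul_assoc]
      _ = (p * a) ^ (2 * n) * t * q ^ n := by rw [← pow_add, ← two_mul]
      _ = (p * a) ^ n * t * q ^ n := by rw [← hn]
      _ = t := h.symm
  obtain ⟨n', rfl⟩ : ∃ n', n = n' + 1 := ⟨n - 1, by omega⟩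
  refine ⟨(p * a) ^ n' * p, ?_⟩
  calc t = (p * a) ^ (n' + 1) * t := habs.symm
    _ = (p * a) ^ n' * (p * a) * t := by rw [pow_succ]
    _ = ((p * a) ^ n' * p) * (a * t) := by simp [mul_assoc]
    _ = ((p * a) ^ n' * p) * s := by rw [← ha]

end Aux

section Semi

variable {S : Type*} [Semigroup S] [Fintype S]

open WithOne in
/-- In a finite semigroup, `s ≤_R t` and `s J t` imply `s R t`. -/
lemma leR_eqJ_to_eqR {s t : S} (h1 : leR s t) (h2 : eqJ s t) : eqR s t := by
  haveI : Finite (WithOne S) := inferInstanceAs (Finite (Option S))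
  refine ⟨h1, ?_⟩
  have hR1 : ∃ a : WithOne S, (s : WithOne S) = (t : WithOne S) * a := by
    rcases h1 with h | ⟨a, ha⟩
    · exact ⟨1, by rw [h, mul_one]⟩
    · exact ⟨(a : WithOne S), by rw [ha]; simp⟩
  have hJ : ∃ p q : WithOne S, (t : WithOne S) = p * (s : WithOne S) * q := by
    rcases h2.2 with (h | ⟨a, ha⟩) | (h | ⟨a, ha⟩) | ⟨a, b, hab⟩
    · exact ⟨1, 1, by rw [h]; simp⟩
    · exact ⟨1, (a : WithOne S), by rw [ha]; simp⟩
    · exact ⟨1, 1, by rw [h]; simp⟩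
    · exact ⟨(a : WithOne S), 1, by rw [ha]; simp⟩
    · exact ⟨(a : WithOne S), (b : WithOne S), by rw [hab]; simp⟩
  obtain ⟨b, hb⟩ := aux_stab hR1 hJ
  induction b using WithOne.recOneCoe with
  | one =>
    left
    exact WithOne.coe_inj.mp (by simpa using hb)
  | coe b =>
    right
    exact ⟨b, WithOne.coe_inj.mp (by simpa using hb)⟩

open WithOne in
/-- In a finite semigroup, `s ≤_L t` and `s J t` imply `s L t`. -/
lemma leL_eqJ_to_eqL {s t : S} (h1 : leL s t) (h2 : eqJ s t) : eqL s t := by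
  haveI : Finite (WithOne S) := inferInstanceAs (Finite (Option S))
  refine ⟨h1, ?_⟩
  have hL1 : ∃ a : WithOne S, (s : WithOne S) = a * (t : WithOne S) := by
    rcases h1 with h | ⟨a, ha⟩
    · exact ⟨1, by rw [h, one_mul]⟩
    · exact ⟨(a : WithOne S), by rw [ha]; simp⟩
  have hJ : ∃ p q : WithOne S, (t : WithOne S) = p * (s : WithOne S) * q := by
    rcases h2.2 with (h | ⟨a, ha⟩) | (h | ⟨a, ha⟩) | ⟨a, b, hab⟩
    · exact ⟨1, 1, by rw [h]; simp⟩
    · exact ⟨1, (a : WithOne S), by rw [ha]; simp⟩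
    · exact ⟨1, 1, by rw [h]; simp⟩
    · exact ⟨(a : WithOne S), 1, by rw [ha]; simp⟩
    · exact ⟨(a : WithOne S), (b : WithOne S), by rw [hab]; simp⟩
  obtain ⟨b, hb⟩ := aux_stab_L hL1 hJ
  induction b using WithOne.recOneCoe with
  | one =>
    left
    exact WithOne.coe_inj.mp (by simpa using hb)
  | coe b =>
    right
    exact ⟨b, WithOne.coe_inj.mp (by simpa using hb)⟩

omit [Fintype S] in
lemma leR_trans {a b c : S} (h1 : leR a b) (h2 : leR b c) : leR a c := by
  rcases h1 with rfl | ⟨x, rfl⟩ <;> rcases h2 with rfl | ⟨y, rfl⟩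
  · left; rfl
  · right; exact ⟨y, rfl⟩
  · right; exact ⟨x, rfl⟩
  · right; exact ⟨y * x, (mul_assoc _ _ _)⟩

omit [Fintype S] in
lemma leL_trans {a b c : S} (h1 : leL a b) (h2 : leL b c) : leL a c := by
  rcases h1 with rfl | ⟨x, rfl⟩ <;> rcases h2 with rfl | ⟨y, rfl⟩
  · left; rfl
  · right; exact ⟨y, rfl⟩
  · right; exact ⟨x, rfl⟩
  · right; exact ⟨x * y, (mul_assoc _ _ _).symm⟩

omit [Fintype S] in
lemma eqR_trans {a b c : S} (h1 : eqR a b) (h2 : eqR b c) : eqR a c :=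
  ⟨leR_trans h1.1 h2.1, leR_trans h2.2 h1.2⟩

omit [Fintype S] in
lemma eqL_trans {a b c : S} (h1 : eqL a b) (h2 : eqL b c) : eqL a c :=
  ⟨leL_trans h1.1 h2.1, leL_trans h2.2 h1.2⟩

end Semi

/-- for an additive colouring with all values on [u,v] in one J-class,
if w < z have the same γ-value (l,r) where γ(z) = (c(u,z), c(z,v)), then c(w,z) is
R-equivalent to r and L-equivalent to l; consequently all colours on γ-monochromatic
sets are H-equivalent. -/
theorem gamma_monochromatic_Hclass (S : Type*) [Semigroup S] [Fintype S]
    (c : ℚ → ℚ → S)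
    (hadd : ∀ x y z : ℚ, x < y → y < z → c x z = c x y * c y z)
    (u v : ℚ) (huv : u < v)
    (hJ : ∀ a b a' b' : ℚ, a ∈ Set.Icc u v → b ∈ Set.Icc u v →
      a' ∈ Set.Icc u v → b' ∈ Set.Icc u v → a < b → a' < b' →
      eqJ (c a b) (c a' b'))
    (l r : S) (w z : ℚ) (hw : w ∈ Set.Ioo u v) (hz : z ∈ Set.Ioo u v) (hwz : w < z)
    (hγw : c u w = l ∧ c w v = r) (hγz : c u z = l ∧ c z v = r) :
    eqR (c w z) r ∧ eqL (c w z) l ∧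
      (∀ w' z' : ℚ, w' ∈ Set.Ioo u v → z' ∈ Set.Ioo u v → w' < z' →
        c u w' = l → c w' v = r → c u z' = l → c z' v = r →
        eqH (c w z) (c w' z')) := by
  have hIcc : ∀ x : ℚ, x ∈ Set.Ioo u v → x ∈ Set.Icc u v := fun x hx =>
    ⟨le_of_lt hx.1, le_of_lt hx.2⟩
  have key : ∀ w' z' : ℚ, w' ∈ Set.Ioo u v → z' ∈ Set.Ioo u v → w' < z' →
      c u w' = l → c w' v = r → c u z' = l → c z' v = r →
      eqR (c w' z') r ∧ eqL (c w' z') l := by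
    intro w' z' hw' hz' hwz' h1 h2 h3 h4
    constructor
    · -- r = c w' v = c w' z' * c z' v = c w' z' * r
      have hr : r = c w' z' * r := by
        conv_lhs => rw [← h2]
        conv_rhs => rw [← h4]
        exact hadd w' z' v hwz' hz'.2
      have hleR : leR r (c w' z') := Or.inr ⟨r, hr⟩
      have hJ' : eqJ r (c w' z') := by
        rw [← h4]
        exact hJ z' v w' z' (hIcc _ hz') ⟨le_of_lt huv, le_refl v⟩
          (hIcc _ hw') (hIcc _ hz') hz'.2 hwz'
      have := leR_eqJ_to_eqR hleR hJ'
      exact ⟨this.2, this.1⟩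
    · -- l = c u z' = c u w' * c w' z' = l * c w' z'
      have hl : l = l * c w' z' := by
        conv_lhs => rw [← h3]
        conv_rhs => rw [← h1]
        exact hadd u w' z' hw'.1 hwz'
      have hleL : leL l (c w' z') := Or.inr ⟨l, hl⟩
      have hJ' : eqJ l (c w' z') := by
        rw [← h1]
        exact hJ u w' w' z' ⟨le_refl u, le_of_lt huv⟩ (hIcc _ hw')
          (hIcc _ hw') (hIcc _ hz') hw'.1 hwz'
      have := leL_eqJ_to_eqL hleL hJ'
      exact ⟨this.2, this.1⟩
  obtain ⟨hRwz, hLwz⟩ := key w z hw hz hwz hγw.1 hγw.2 hγz.1 hγz.2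
  refine ⟨hRwz, hLwz, ?_⟩
  intro w' z' hw' hz' hwz' h1 h2 h3 h4
  obtain ⟨hR', hL'⟩ := key w' z' hw' hz' hwz' h1 h2 h3 h4
  exact ⟨eqR_trans hRwz ⟨hR'.2, hR'.1⟩, eqL_trans hLwz ⟨hL'.2, hL'.1⟩⟩
end
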